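/- In the setting of the previous recursion, for k ≥ 1 and ζ ∈ X^+_k (ζ^k ∈ X^{++}, ζ^{k+1} = ζ^{k+2} = ⋯ = 0), one has S^{k+1}_ζ = S¹_{ζ^0+pρ}·(S¹_{ζ^1+pρ})^{(1)} ⋯ (S¹_{ζ^{k−1}+pρ})^{(k−1)} · (S¹_{ζ^k})^{(k)}. -/

import Mathlib

open Finset

/-- Base-`p` digit number `k` of a weight `ζ ∈ ℤ^I` (coordinatewise). -/
def digit (p k : ℕ) {I : Type*} (ζ : I → ℤ) : I → ℤ :=
  fun i => (ζ i / (p : ℤ) ^ k) % (p : ℤ)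

/-- The truncated tail `ζ^j + p ζ^{j+1} + p² ζ^{j+2} + ⋯` of the base-`p` expansion. -/
noncomputable def tailFrom (p j : ℕ) {I : Type*} (ζ : I → ℤ) : I → ℤ :=
  fun i => ∑ᶠ k : ℕ, (p : ℤ) ^ k * digit p (j + k) ζ i

/-- Dominant weights `X^+`. -/
def dominant {I : Type*} (ζ : I → ℤ) : Prop := ∀ i, 0 ≤ ζ i

/-- Strictly dominant weights `X^{++} = X^+ + ρ`. -/
def strictDom {I : Type*} (ζ : I → ℤ) : Prop := ∀ i, 1 ≤ ζ i

/-- `p`-restricted weights `X^+_red`. -/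
def restricted (p : ℕ) {I : Type*} (ζ : I → ℤ) : Prop :=
  ∀ i, 0 ≤ ζ i ∧ ζ i ≤ (p : ℤ) - 1

/-- The Weyl vector `ρ` (all coordinates equal to `1` in fundamental weight coordinates). -/
def rho {I : Type*} : I → ℤ := fun _ => 1

/-- The Frobenius twist `ξ ↦ ξ^{(h)}`, sending `e^λ` to `e^{p^h λ}`, as a ring
homomorphism of the group ring `ℤ[X]`, `X = ℤ^I`. -/
noncomputable def twist (p h : ℕ) {I : Type*} :
    AddMonoidAlgebra ℤ (I → ℤ) →+* AddMonoidAlgebra ℤ (I → ℤ) :=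
  AddMonoidAlgebra.mapDomainRingHom ℤ
    (AddMonoidHom.mk' (fun l => ((p : ℤ) ^ h) • l) (fun a b => smul_add _ a b))

/-- The functions `S^h` of no. 4 of the paper, defined inductively from `S¹` by
`S^h_ζ = Σ_{μ ∈ X^{++}} x_{μ, ζ^{h−1}+pζ^h+⋯} · S^{h−1}_{ζ^0+pζ^1+⋯+p^{h−2}ζ^{h−2}+p^{h−1}μ}`,
where `x_{μ,ζ}` are the coefficients of `S¹` in the basis `S⁰` (extended by zero off
`X^{++}`); by convention `S^0 := S¹`. -/
noncomputable def Sh {I : Type*} (p : ℕ) (x : (I → ℤ) → (I → ℤ) → ℤ)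
    (S1 : (I → ℤ) → AddMonoidAlgebra ℤ (I → ℤ)) :
    ℕ → (I → ℤ) → AddMonoidAlgebra ℤ (I → ℤ)
  | 0 => S1
  | 1 => S1
  | (h + 2) => fun ζ => ∑ᶠ μ : I → ℤ, x μ (tailFrom p (h + 1) ζ) •
      Sh p x S1 (h + 1)
        ((∑ j ∈ Finset.range (h + 1), (p : ℤ) ^ j • digit p j ζ) + (p : ℤ) ^ (h + 1) • μ)

lemma ediv_ediv' (a : ℤ) {b c : ℤ} (hb : 0 < b) (hc : 0 < c) :
    a / b / c = a / (b * c) := by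
  have hbc : 0 < b * c := mul_pos hb hc
  have h1 : a = (b * (a / b % c) + a % b) + a / b / c * (b * c) := by
    rw [Int.emod_def, Int.emod_def]; ring
  have h2 : a / (b * c) = (b * (a / b % c) + a % b) / (b * c) + a / b / c := by
    conv_lhs => rw [h1]
    rw [Int.add_mul_ediv_right _ _ (ne_of_gt hbc)]
  have h3 : (b * (a / b % c) + a % b) / (b * c) = 0 := by
    apply Int.ediv_eq_zero_of_lt
    · have := Int.emod_nonneg a (ne_of_gt hb)
      have := Int.emod_nonneg (a / b) (ne_of_gt hc)
      positivity
    · have h4 : a % b < b := Int.emod_lt_of_pos a hb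
      have h5 : a / b % c ≤ c - 1 := by
        have := Int.emod_lt_of_pos (a / b) hc; omega
      nlinarith
  rw [h2, h3, zero_add]

lemma digitSum (p : ℕ) (hp : 2 ≤ p) (m : ℤ) (N : ℕ) :
    ∑ k ∈ Finset.range N, (p : ℤ) ^ k * (m / (p : ℤ) ^ k % p) = m % (p : ℤ) ^ N := by
  have hP : (0 : ℤ) < (p : ℤ) := by exact_mod_cast lt_of_lt_of_le Nat.zero_lt_two hp
  induction N with
  | zero => simp
  | succ N ih =>
    rw [Finset.sum_range_succ, ih, pow_succ,
      Int.emod_def m ((p : ℤ) ^ N * p), ← ediv_ediv' m (pow_pos hP N) hP,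
      Int.emod_def m ((p : ℤ) ^ N), Int.emod_def (m / (p : ℤ) ^ N) (p : ℤ)]
    ring

lemma finsumDigits (p : ℕ) (hp : 2 ≤ p) (m : ℤ) (hm : 0 ≤ m) :
    ∑ᶠ k : ℕ, (p : ℤ) ^ k * (m / (p : ℤ) ^ k % p) = m := by
  have hP : (0 : ℤ) < (p : ℤ) := by exact_mod_cast lt_of_lt_of_le Nat.zero_lt_two hp
  have hmN : m < (p : ℤ) ^ m.toNat := by
    calc m = (m.toNat : ℤ) := (Int.toNat_of_nonneg hm).symm
    _ < (2 : ℤ) ^ m.toNat := by exact_mod_cast (Nat.lt_two_pow_self (n := m.toNat))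
    _ ≤ (p : ℤ) ^ m.toNat := pow_le_pow_left₀ (by norm_num) (by exact_mod_cast hp) _
  rw [finsum_eq_sum_of_support_subset _ (s := Finset.range m.toNat)
    (by
      intro k hk
      simp only [Function.mem_support, Finset.coe_range, Set.mem_Iio] at hk ⊢
      by_contra hkN
      push_neg at hkN
      have : m < (p : ℤ) ^ k :=
        lt_of_lt_of_le hmN (pow_le_pow_right₀ (by exact_mod_cast le_trans one_le_two hp) hkN)
      rw [Int.ediv_eq_zero_of_lt hm this] at hk
      simp at hk),
    digitSum p hp, Int.emod_eq_of_lt hm hmN]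

lemma tailFrom_eq_ediv {I : Type*} (p : ℕ) (hp : 2 ≤ p) (ζ : I → ℤ) (hζ : dominant ζ)
    (j : ℕ) (i : I) : tailFrom p j ζ i = ζ i / (p : ℤ) ^ j := by
  have hP : (0 : ℤ) < (p : ℤ) := by exact_mod_cast lt_of_lt_of_le Nat.zero_lt_two hp
  have key : ∀ k : ℕ, ζ i / (p : ℤ) ^ (j + k) = ζ i / (p : ℤ) ^ j / (p : ℤ) ^ k := by
    intro k
    rw [pow_add, ediv_ediv' _ (pow_pos hP j) (pow_pos hP k)]
  calc tailFrom p j ζ i = ∑ᶠ k : ℕ, (p : ℤ) ^ k * (ζ i / (p : ℤ) ^ j / (p : ℤ) ^ k % p) :=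
        finsum_congr fun k => by show (p:ℤ)^k * (ζ i / (p:ℤ)^(j+k) % p) = _; rw [key k]
  _ = ζ i / (p : ℤ) ^ j :=
        finsumDigits p hp _ (Int.ediv_nonneg (hζ i) (pow_pos hP j).le)

lemma digit_shift (p : ℕ) (hp : 2 ≤ p) {j K : ℕ} (hj : j ≤ K) (a c : ℤ) :
    (a + (p : ℤ) ^ (K + 1) * c) / (p : ℤ) ^ j % p = a / (p : ℤ) ^ j % p := by
  have hP : (0 : ℤ) < (p : ℤ) := by exact_mod_cast lt_of_lt_of_le Nat.zero_lt_two hp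
  have h1 : (p : ℤ) ^ (K + 1) * c = ((p : ℤ) ^ (K - j + 1) * c) * (p : ℤ) ^ j := by
    rw [mul_right_comm, ← pow_add]
    congr 2
    omega
  rw [h1, Int.add_mul_ediv_right _ _ (ne_of_gt (pow_pos hP j)),
    pow_succ', mul_assoc, Int.add_mul_emod_self_left]

lemma twist_apply {I : Type*} (p h : ℕ) (f : AddMonoidAlgebra ℤ (I → ℤ)) :
    twist p h f = AddMonoidAlgebra.ofCoeff
      (Finsupp.mapDomain (fun l : I → ℤ => ((p : ℤ) ^ h) • l) f.coeff) := rfl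

lemma twist_zero_apply {I : Type*} (p : ℕ) (f : AddMonoidAlgebra ℤ (I → ℤ)) :
    twist p 0 f = f := by
  rw [twist_apply]
  have h : (fun l : I → ℤ => ((p : ℤ) ^ 0) • l) = id := by
    funext l; simp
  rw [h, Finsupp.mapDomain_id, AddMonoidAlgebra.ofCoeff_coeff]

lemma twist_twist {I : Type*} (p a b : ℕ) (f : AddMonoidAlgebra ℤ (I → ℤ)) :
    twist p a (twist p b f) = twist p (a + b) f := by
  rw [twist_apply, twist_apply, twist_apply, AddMonoidAlgebra.coeff_ofCoeff, ← Finsupp.mapDomain_comp]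
  congr 2
  funext l
  simp [smul_smul, pow_add, mul_comm]
  ring

lemma Sh_key {I : Type*} (p : ℕ) (hp : 2 ≤ p)
    (x : (I → ℤ) → (I → ℤ) → ℤ)
    (S0 S1 : (I → ℤ) → AddMonoidAlgebra ℤ (I → ℤ))
    (hxfin : ∀ ζ : I → ℤ, (Function.support fun μ => x μ ζ).Finite)
    (hxsupp : ∀ μ ζ : I → ℤ, x μ ζ ≠ 0 → strictDom μ)
    (hx : ∀ ζ : I → ℤ, strictDom ζ → S1 ζ = ∑ᶠ μ : I → ℤ, x μ ζ • S0 μ)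
    (hfact : ∀ ζ : I → ℤ, dominant ζ → strictDom (tailFrom p 1 ζ) →
      S1 ζ = S1 (digit p 0 ζ + (p : ℤ) • rho) * twist p 1 (S0 (tailFrom p 1 ζ))) :
    ∀ (k : ℕ) (ζ : I → ℤ), dominant ζ → strictDom (tailFrom p k ζ) →
    Sh p x S1 (k + 1) ζ =
      (∏ j ∈ Finset.range k, twist p j (S1 (digit p j ζ + (p : ℤ) • rho))) *
        twist p k (S1 (tailFrom p k ζ)) := by
  have hP : (0 : ℤ) < (p : ℤ) := by exact_mod_cast lt_of_lt_of_le Nat.zero_lt_two hp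
  intro k
  induction k with
  | zero =>
    intro ζ hζ htail
    have h0 : tailFrom p 0 ζ = ζ := by
      funext i
      rw [tailFrom_eq_ediv p hp ζ hζ 0 i, pow_zero, Int.ediv_one]
    rw [h0]
    simp only [Finset.range_zero, Finset.prod_empty, one_mul, twist_zero_apply]
    rfl
  | succ k ih =>
    intro ζ hζ htail
    set T := tailFrom p (k + 1) ζ with hT
    have hsh : Sh p x S1 (k + 1 + 1) ζ = ∑ᶠ μ : I → ℤ, x μ T •
        Sh p x S1 (k + 1)
          ((∑ j ∈ Finset.range (k + 1), (p : ℤ) ^ j • digit p j ζ) + (p : ℤ) ^ (k + 1) • μ) := by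
      rw [show k + 1 + 1 = k + 2 from rfl]
      simp only [Sh, hT]
    set D := ∏ j ∈ Finset.range (k + 1), twist p j (S1 (digit p j ζ + (p : ℤ) • rho)) with hD
    set trunc := ∑ j ∈ Finset.range (k + 1), (p : ℤ) ^ j • digit p j ζ with htrunc
    have htrunci : ∀ i, trunc i = ζ i % (p : ℤ) ^ (k + 1) := by
      intro i
      rw [htrunc]
      simp only [Finset.sum_apply, Pi.smul_apply, smul_eq_mul]
      exact digitSum p hp (ζ i) (k + 1)
    -- pointwise rewriting of the summand
    have hpt : ∀ μ : I → ℤ, x μ T • Sh p x S1 (k + 1) (trunc + (p : ℤ) ^ (k + 1) • μ)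
        = x μ T • (D * twist p (k + 1) (S0 μ)) := by
      intro μ
      by_cases hxμ : x μ T = 0
      · rw [hxμ, zero_smul, zero_smul]
      have hμ : strictDom μ := hxsupp μ T hxμ
      set η : I → ℤ := trunc + (p : ℤ) ^ (k + 1) • μ with hη
      have hηi : ∀ i, η i = ζ i % (p : ℤ) ^ (k + 1) + (p : ℤ) ^ (k + 1) * μ i := by
        intro i
        rw [hη]
        simp only [Pi.add_apply, Pi.smul_apply, smul_eq_mul, htrunci i]
      have hηζ : ∀ i, η i = ζ i + (p : ℤ) ^ (k + 1) * (μ i - ζ i / (p : ℤ) ^ (k + 1)) := by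
        intro i
        rw [hηi i, Int.emod_def]
        ring
      have hηdom : dominant η := by
        intro i
        rw [hηi i]
        have h1 := Int.emod_nonneg (ζ i) (ne_of_gt (pow_pos hP (k + 1)))
        have h2 : (0 : ℤ) ≤ (p : ℤ) ^ (k + 1) * μ i := by
          have := hμ i
          positivity
        linarith
      have hdig : ∀ j, j ≤ k → digit p j η = digit p j ζ := by
        intro j hj
        funext i
        show η i / (p : ℤ) ^ j % p = ζ i / (p : ℤ) ^ j % p
        rw [hηζ i, digit_shift p hp hj]
      have hrdig : ∀ i, ζ i % (p : ℤ) ^ (k + 1) / (p : ℤ) ^ k = digit p k ζ i := by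
        intro i
        have hr0 : (0 : ℤ) ≤ ζ i % (p : ℤ) ^ (k + 1) :=
          Int.emod_nonneg _ (ne_of_gt (pow_pos hP (k + 1)))
        have hrlt : ζ i % (p : ℤ) ^ (k + 1) < (p : ℤ) ^ (k + 1) :=
          Int.emod_lt_of_pos _ (pow_pos hP (k + 1))
        have hζdecomp : ζ i = ζ i % (p : ℤ) ^ (k + 1)
            + (p : ℤ) ^ (k + 1) * (ζ i / (p : ℤ) ^ (k + 1)) := by
          rw [Int.emod_def]; ring
        have h1 : digit p k ζ i = ζ i % (p : ℤ) ^ (k + 1) / (p : ℤ) ^ k % p := by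
          show ζ i / (p : ℤ) ^ k % p = _
          conv_lhs => rw [hζdecomp]
          rw [digit_shift p hp (le_refl k)]
        rw [h1]
        refine (Int.emod_eq_of_lt (Int.ediv_nonneg hr0 (pow_pos hP k).le) ?_).symm
        rw [Int.ediv_lt_iff_lt_mul (pow_pos hP k)]
        calc ζ i % (p : ℤ) ^ (k + 1) < (p : ℤ) ^ (k + 1) := hrlt
        _ = (p : ℤ) * (p : ℤ) ^ k := by rw [pow_succ]; ring
      have htailη : tailFrom p k η = digit p k ζ + (p : ℤ) • μ := by
        funext i
        rw [tailFrom_eq_ediv p hp η hηdom k i, hηi i]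
        have hsplit : ζ i % ((p:ℤ)^(k+1)) + (p : ℤ) ^ (k+1) * μ i
            = ζ i % ((p:ℤ)^(k+1)) + ((p:ℤ) * μ i) * (p : ℤ) ^ k := by
          rw [pow_succ]; ring
        rw [hsplit, Int.add_mul_ediv_right _ _ (ne_of_gt (pow_pos hP k))]
        have := hrdig i
        simp only [Pi.add_apply, Pi.smul_apply, smul_eq_mul]
        omega
      have htailηsd : strictDom (tailFrom p k η) := by
        rw [htailη]
        intro i
        have h1 : 0 ≤ digit p k ζ i := Int.emod_nonneg _ (ne_of_gt hP)
        have h2 : (p : ℤ) * 1 ≤ (p : ℤ) * μ i := by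
          have := hμ i
          nlinarith
        simp only [Pi.add_apply, Pi.smul_apply, smul_eq_mul]
        omega
      -- apply IH
      rw [ih η hηdom htailηsd]
      -- rewrite the product digits
      have hprod : (∏ j ∈ Finset.range k, twist p j (S1 (digit p j η + (p : ℤ) • rho)))
          = ∏ j ∈ Finset.range k, twist p j (S1 (digit p j ζ + (p : ℤ) • rho)) :=
        Finset.prod_congr rfl fun j hj => by
          rw [hdig j (le_of_lt (Finset.mem_range.mp hj))]
      rw [hprod, htailη]
      -- factor S1 (digit p k ζ + p • μ) via hfact
      set ξ : I → ℤ := digit p k ζ + (p : ℤ) • μ with hξ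
      have hξi : ∀ i, ξ i = digit p k ζ i + (p : ℤ) * μ i := by
        intro i; rw [hξ]; simp
      have hdig0 : (0:ℤ) ≤ 0 := le_refl 0
      have hdignn : ∀ i, 0 ≤ digit p k ζ i := fun i => Int.emod_nonneg _ (ne_of_gt hP)
      have hdiglt : ∀ i, digit p k ζ i < (p : ℤ) := fun i => Int.emod_lt_of_pos _ hP
      have hξdom : dominant ξ := by
        intro i
        rw [hξi i]
        have := hμ i
        nlinarith [hdignn i]
      have hξdigit0 : digit p 0 ξ = digit p k ζ := by
        funext i
        show ξ i / (p : ℤ) ^ 0 % p = _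
        rw [pow_zero, Int.ediv_one, hξi i,
          show digit p k ζ i + (p:ℤ) * μ i = digit p k ζ i + (p:ℤ) * μ i from rfl,
          Int.add_mul_emod_self_left]
        exact Int.emod_eq_of_lt (hdignn i) (hdiglt i)
      have hξtail1 : tailFrom p 1 ξ = μ := by
        funext i
        rw [tailFrom_eq_ediv p hp ξ hξdom 1 i, pow_one, hξi i,
          show digit p k ζ i + (p:ℤ) * μ i = digit p k ζ i + μ i * (p:ℤ) by ring,
          Int.add_mul_ediv_right _ _ (ne_of_gt hP),
          Int.ediv_eq_zero_of_lt (hdignn i) (hdiglt i), zero_add]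
      have hfactξ := hfact ξ hξdom (by rw [hξtail1]; exact hμ)
      rw [hξdigit0, hξtail1] at hfactξ
      rw [hfactξ, map_mul, twist_twist]
      rw [hD, Finset.prod_range_succ]
      simp only [mul_assoc]
    rw [hsh, finsum_congr hpt]
    -- pull constants out of the finsum
    have hsupp : (Function.support fun μ : I → ℤ => x μ T • twist p (k + 1) (S0 μ)) ⊆
        Function.support fun μ => x μ T := by
      intro μ h
      simp only [Function.mem_support] at h ⊢
      intro h0
      rw [h0, zero_smul] at h
      exact h rfl
    calc (∑ᶠ μ : I → ℤ, x μ T • (D * twist p (k + 1) (S0 μ)))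
        = ∑ᶠ μ : I → ℤ, D * (x μ T • twist p (k + 1) (S0 μ)) :=
          finsum_congr fun μ => (mul_smul_comm _ _ _).symm
    _ = D * ∑ᶠ μ : I → ℤ, x μ T • twist p (k + 1) (S0 μ) :=
          (mul_finsum' _ D ((hxfin T).subset hsupp)).symm
    _ = D * ∑ᶠ μ : I → ℤ, twist p (k + 1) (x μ T • S0 μ) :=
          congrArg _ (finsum_congr fun μ => by rw [map_zsmul])
    _ = D * twist p (k + 1) (∑ᶠ μ : I → ℤ, x μ T • S0 μ) := by
          congr 1
          refine ((twist p (k + 1)).toAddMonoidHom.map_finsum ?_).symm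
          apply (hxfin T).subset
          intro μ h
          simp only [Function.mem_support] at h ⊢
          intro h0
          rw [h0, zero_smul] at h
          exact h rfl
    _ = D * twist p (k + 1) (S1 T) := by rw [← hx T htail]

/-- in the setting of the previous recursion, for `k ≥ 1` and `ζ ∈ X^+_k`
(`ζ^k ∈ X^{++}`, `ζ^j = 0` for `j > k`), one has
`S^{k+1}_ζ = S¹_{ζ^0+pρ}·(S¹_{ζ^1+pρ})^{(1)} ⋯ (S¹_{ζ^{k−1}+pρ})^{(k−1)} · (S¹_{ζ^k})^{(k)}`. -/
theorem Sh_top_factorization {I : Type*} [Fintype I] (p : ℕ) (hp : 2 ≤ p)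
    (x : (I → ℤ) → (I → ℤ) → ℤ)
    (S0 S1 : (I → ℤ) → AddMonoidAlgebra ℤ (I → ℤ))
    (hS0 : LinearIndependent ℤ (fun μ : {μ : I → ℤ // strictDom μ} => S0 μ.1))
    (hxfin : ∀ ζ : I → ℤ, (Function.support fun μ => x μ ζ).Finite)
    (hxsupp : ∀ μ ζ : I → ℤ, x μ ζ ≠ 0 → strictDom μ)
    (hx : ∀ ζ : I → ℤ, strictDom ζ → S1 ζ = ∑ᶠ μ : I → ℤ, x μ ζ • S0 μ)
    (hfact : ∀ ζ : I → ℤ, dominant ζ → strictDom (tailFrom p 1 ζ) →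
      S1 ζ = S1 (digit p 0 ζ + (p : ℤ) • rho) * twist p 1 (S0 (tailFrom p 1 ζ)))
    (k : ℕ) (hk : 1 ≤ k) (ζ : I → ℤ) (hζ : dominant ζ)
    (htop : strictDom (digit p k ζ))
    (hzero : ∀ j, k < j → digit p j ζ = 0) :
    Sh p x S1 (k + 1) ζ =
      (∏ j ∈ Finset.range k, twist p j (S1 (digit p j ζ + (p : ℤ) • rho))) *
        twist p k (S1 (digit p k ζ)) := by
  have hP : (0 : ℤ) < (p : ℤ) := by exact_mod_cast lt_of_lt_of_le Nat.zero_lt_two hp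
  have htail1 : ∀ i, ζ i / (p : ℤ) ^ (k + 1) = 0 := by
    intro i
    rw [← tailFrom_eq_ediv p hp ζ hζ (k + 1) i]
    have : ∀ m : ℕ, (p : ℤ) ^ m * digit p (k + 1 + m) ζ i = 0 := by
      intro m
      rw [hzero (k + 1 + m) (by omega)]
      simp
    rw [show tailFrom p (k + 1) ζ i = ∑ᶠ m : ℕ, (p : ℤ) ^ m * digit p (k + 1 + m) ζ i from rfl,
      finsum_congr this, finsum_zero]
  have h1 : tailFrom p k ζ = digit p k ζ := by
    funext i
    rw [tailFrom_eq_ediv p hp ζ hζ k i]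
    have h2 : ζ i / (p : ℤ) ^ k / (p : ℤ) = 0 := by
      rw [ediv_ediv' _ (pow_pos hP k) hP, ← pow_succ]
      exact htail1 i
    show _ = ζ i / (p : ℤ) ^ k % (p : ℤ)
    rw [Int.emod_def, h2]
    ring
  rw [← h1]
  exact Sh_key p hp x S0 S1 hxfin hxsupp hx hfact k ζ hζ (by rw [h1]; exact htop)
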